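/- For any constant A ≥ 1 and a > 0, the function g(u) = A·u² − min{(max{u,0})², a} is convex on ℝ. -/

import Mathlib

lemma img_max : (fun u : ℝ => max u 0) '' Set.univ = Set.Ici 0 := by
  ext x
  constructor
  · rintro ⟨u, -, rfl⟩; exact le_max_right u 0
  · intro hx; exact ⟨x, trivial, max_eq_left hx⟩

lemma hsq_conv : ConvexOn ℝ Set.univ (fun u : ℝ => (max u 0) ^ 2) := by
  have hmax : ConvexOn ℝ Set.univ (fun u : ℝ => max u 0) :=
    (convexOn_id convex_univ).sup (convexOn_const 0 convex_univ)
  have hpow : ConvexOn ℝ ((fun u : ℝ => max u 0) '' Set.univ) (fun x : ℝ => x ^ 2) := by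
    rw [img_max]; exact convexOn_pow 2
  have hmono : MonotoneOn (fun x : ℝ => x ^ 2) ((fun u : ℝ => max u 0) '' Set.univ) := by
    rw [img_max]
    intro x hx y _ hxy
    exact pow_le_pow_left₀ hx hxy 2
  exact hpow.comp hmax hmono

theorem stmt_2 (a A : ℝ) (ha : 0 < a) (hA : 1 ≤ A) :
    ConvexOn ℝ Set.univ (fun u : ℝ => A * u ^ 2 - min ((max u 0) ^ 2) a) := by
  have h1 : ConvexOn ℝ Set.univ (fun u : ℝ => (A - 1) * u ^ 2) :=
    ((Even.convexOn_pow even_two).smul (by linarith))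
  have h2 : ConvexOn ℝ Set.univ (fun u : ℝ => (max (-u) 0) ^ 2) := by
    have := hsq_conv.comp_affineMap (AffineMap.mk' (fun u : ℝ => -u) (-LinearMap.id) 0 (by intro p; simp))
    simpa [Function.comp_def] using this
  have h3 : ConvexOn ℝ Set.univ (fun u : ℝ => max ((max u 0) ^ 2 - a) 0) := by
    have := (hsq_conv.sub (concaveOn_const a convex_univ)).sup (convexOn_const 0 convex_univ)
    simpa [Pi.sup_def] using this
  have hsum := (h1.add h2).add h3
  have heq : (fun u : ℝ => A * u ^ 2 - min ((max u 0) ^ 2) a)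
      = (fun u : ℝ => (A - 1) * u ^ 2 + (max (-u) 0) ^ 2 + max ((max u 0) ^ 2 - a) 0) := by
    funext u
    rcases le_total u 0 with h | h
    · rw [max_eq_right h, max_eq_left (neg_nonneg.mpr h)]
      rw [min_eq_left (by simpa using ha.le : (0:ℝ)^2 ≤ a)]
      rw [max_eq_right (by simpa using ha.le)]
      ring
    · rw [max_eq_left h, max_eq_right (neg_nonpos.mpr h)]
      rcases le_total (u ^ 2) a with h' | h'
      · rw [min_eq_left h', max_eq_right (by linarith)]; ring
      · rw [min_eq_right h', max_eq_left (by linarith)]; ring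
  rw [heq]
  exact hsum
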